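/- Second perturbation lemma: With a contraction (i,p,h_Y) from (X,d_X) to (Y,d_Y) satisfying the side condition h_Y∘i = 0, and a perturbation D_Y = d_Y + t_Y with t_Y∘i = i∘t_X (where D_X = d_X + t_X, D_X² = 0) and t_Y h_Y + h_Y t_Y filtration-raising, the maps P := p(id + t_Y h_Y + h_Y t_Y)^{-1} and H'_Y := h_Y(id + t_Y h_Y + h_Y t_Y)^{-1} give a contraction (i, P, H'_Y) from (X,D_X) to (Y,D_Y) with H'_Y∘i = 0. -/

import Mathlib

/-- **Second perturbation lemma.**
Given a contraction `(i, p, h)` of filtered complexes `(X, dX)` and `(Y, dY)` with the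
side condition `h ∘ i = 0`, and a perturbation `DY = dY + t` of `dY` with `t ∘ i = i ∘ tX`
(where `DX = dX + tX` squares to zero) such that `T := t h + h t` raises the filtration
degree (so that `id + T` is invertible, with inverse `S`), the maps `P := p ∘ S` and
`H' := h ∘ S` give a contraction `(i, P, H')` from `(X, DX)` to `(Y, DY)` with
`H' ∘ i = 0`; moreover if all side conditions hold for `(i, p, h)` they hold for
`(i, P, H')`. -/
theorem perturbation_lemma_two
    (K : Type*) [Field K]
    (X Y : Type*) [AddCommGroup X] [Module K X] [AddCommGroup Y] [Module K Y]
    (dX : X →ₗ[K] X) (dY : Y →ₗ[K] Y)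
    (i : X →ₗ[K] Y) (p : Y →ₗ[K] X) (h : Y →ₗ[K] Y)
    (t : Y →ₗ[K] Y) (tX : X →ₗ[K] X)
    -- descending Hausdorff filtration, preserved by the structure maps
    (F : ℕ → Submodule K Y)
    (hFdesc : ∀ k, F (k + 1) ≤ F k)
    (hFhaus : (⨅ k, F k) = ⊥)
    (hFd : ∀ k, ∀ y ∈ F k, dY y ∈ F k)
    (hFh : ∀ k, ∀ y ∈ F k, h y ∈ F k)
    (hFt : ∀ k, ∀ y ∈ F k, t y ∈ F k)
    -- the initiator raises the filtration …
    (hraise : ∀ k, ∀ y ∈ F k, (t ∘ₗ h + h ∘ₗ t) y ∈ F (k + 1))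
    -- … so that `id + t h + h t` is invertible, with inverse `S`
    (S : Y →ₗ[K] Y)
    (hS1 : S ∘ₗ (LinearMap.id + (t ∘ₗ h + h ∘ₗ t)) = LinearMap.id)
    (hS2 : (LinearMap.id + (t ∘ₗ h + h ∘ₗ t)) ∘ₗ S = LinearMap.id)
    -- complexes and contraction data
    (hdX2 : dX ∘ₗ dX = 0) (hdY2 : dY ∘ₗ dY = 0)
    (hichain : dY ∘ₗ i = i ∘ₗ dX)
    (hpchain : dX ∘ₗ p = p ∘ₗ dY)
    (hpi : p ∘ₗ i = LinearMap.id)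
    (hhom : dY ∘ₗ h + h ∘ₗ dY = LinearMap.id - i ∘ₗ p)
    -- side condition (sc2)
    (hsc2 : h ∘ₗ i = 0)
    -- the perturbation
    (hDY2 : (dY + t) ∘ₗ (dY + t) = 0)
    (hDX2 : (dX + tX) ∘ₗ (dX + tX) = 0)
    (hcomm : t ∘ₗ i = i ∘ₗ tX) :
    (let DX : X →ₗ[K] X := dX + tX
     let DY : Y →ₗ[K] Y := dY + t
     let P : Y →ₗ[K] X := p ∘ₗ S
     let H' : Y →ₗ[K] Y := h ∘ₗ S
     -- `(i, P, H')` is a contraction from `(X, DX)` to `(Y, DY)` …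
     P ∘ₗ i = LinearMap.id ∧
     DY ∘ₗ i = i ∘ₗ DX ∧
     DX ∘ₗ P = P ∘ₗ DY ∧
     DY ∘ₗ H' + H' ∘ₗ DY = LinearMap.id - i ∘ₗ P ∧
     -- … with the side condition (sc2)
     H' ∘ₗ i = 0 ∧
     -- and if all side conditions hold for `(i, p, h)` they hold for `(i, P, H')`
     (h ∘ₗ h = 0 → p ∘ₗ h = 0 → (H' ∘ₗ H' = 0 ∧ P ∘ₗ H' = 0))) := by

  intro DX DY P H'
  have hTi : (t ∘ₗ h + h ∘ₗ t) ∘ₗ i = 0 := by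
    simp only [LinearMap.add_comp, LinearMap.comp_assoc, hsc2, hcomm, LinearMap.comp_zero,
      zero_add]
    rw [← LinearMap.comp_assoc, hsc2, LinearMap.zero_comp]
  have hSi : S ∘ₗ i = i := by
    have h1 : (LinearMap.id + (t ∘ₗ h + h ∘ₗ t)) ∘ₗ i = i := by
      rw [LinearMap.add_comp, hTi, LinearMap.id_comp, add_zero]
    calc S ∘ₗ i = S ∘ₗ ((LinearMap.id + (t ∘ₗ h + h ∘ₗ t)) ∘ₗ i) := by rw [h1]
      _ = (S ∘ₗ (LinearMap.id + (t ∘ₗ h + h ∘ₗ t))) ∘ₗ i := by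
            rw [LinearMap.comp_assoc]
      _ = i := by rw [hS1, LinearMap.id_comp]
  have hDYi : (dY + t) ∘ₗ i = i ∘ₗ (dX + tX) := by
    rw [LinearMap.add_comp, LinearMap.comp_add, hichain, hcomm]
  have star : (dY + t) ∘ₗ h + h ∘ₗ (dY + t)
      = (LinearMap.id + (t ∘ₗ h + h ∘ₗ t)) - i ∘ₗ p := by
    rw [LinearMap.add_comp, LinearMap.comp_add]
    have : dY ∘ₗ h + t ∘ₗ h + (h ∘ₗ dY + h ∘ₗ t)
        = (dY ∘ₗ h + h ∘ₗ dY) + (t ∘ₗ h + h ∘ₗ t) := by abel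
    rw [this, hhom]
    abel
  have e1 : (dY + t) ∘ₗ (h ∘ₗ (dY + t))
      = (dY + t) ∘ₗ (LinearMap.id + (t ∘ₗ h + h ∘ₗ t)) - (dY + t) ∘ₗ (i ∘ₗ p) := by
    have h0 := congrArg (fun f => (dY + t) ∘ₗ f) star
    rw [LinearMap.comp_add, LinearMap.comp_sub] at h0
    rw [← LinearMap.comp_assoc h (dY + t) (dY + t), hDY2, LinearMap.zero_comp, zero_add] at h0
    exact h0
  have e2 : ((dY + t) ∘ₗ h) ∘ₗ (dY + t)
      = (LinearMap.id + (t ∘ₗ h + h ∘ₗ t)) ∘ₗ (dY + t) - (i ∘ₗ p) ∘ₗ (dY + t) := by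
    have h0 := congrArg (fun f => f ∘ₗ (dY + t)) star
    rw [LinearMap.add_comp, LinearMap.sub_comp] at h0
    rw [LinearMap.comp_assoc (dY + t) (dY + t) h, hDY2, LinearMap.comp_zero, add_zero] at h0
    exact h0
  have hcomm3 : (dY + t) ∘ₗ (LinearMap.id + (t ∘ₗ h + h ∘ₗ t))
        - (LinearMap.id + (t ∘ₗ h + h ∘ₗ t)) ∘ₗ (dY + t)
      = (dY + t) ∘ₗ (i ∘ₗ p) - (i ∘ₗ p) ∘ₗ (dY + t) := by
    have h12 : (dY + t) ∘ₗ (LinearMap.id + (t ∘ₗ h + h ∘ₗ t)) - (dY + t) ∘ₗ (i ∘ₗ p)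
        = (LinearMap.id + (t ∘ₗ h + h ∘ₗ t)) ∘ₗ (dY + t) - (i ∘ₗ p) ∘ₗ (dY + t) := by
      rw [← e1, ← e2, LinearMap.comp_assoc]
    exact sub_eq_sub_iff_sub_eq_sub.mp h12
  have c1 : S ∘ₗ (dY + t)
      = S ∘ₗ (((dY + t) ∘ₗ (LinearMap.id + (t ∘ₗ h + h ∘ₗ t))) ∘ₗ S) := by
    rw [LinearMap.comp_assoc, hS2, LinearMap.comp_id]
  have c2 : (dY + t) ∘ₗ S
      = S ∘ₗ (((LinearMap.id + (t ∘ₗ h + h ∘ₗ t)) ∘ₗ (dY + t)) ∘ₗ S) := by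
    rw [← LinearMap.comp_assoc, ← LinearMap.comp_assoc, hS1, LinearMap.id_comp]
  have k1 : S ∘ₗ (((dY + t) ∘ₗ (i ∘ₗ p)) ∘ₗ S) = i ∘ₗ ((dX + tX) ∘ₗ (p ∘ₗ S)) := by
    have hd : (dY + t) ∘ₗ (i ∘ₗ p) = i ∘ₗ ((dX + tX) ∘ₗ p) := by
      rw [← LinearMap.comp_assoc, hDYi, LinearMap.comp_assoc]
    rw [hd]
    simp only [LinearMap.comp_assoc]
    rw [← LinearMap.comp_assoc _ i S, hSi]
  have k2 : S ∘ₗ (((i ∘ₗ p) ∘ₗ (dY + t)) ∘ₗ S) = i ∘ₗ (p ∘ₗ ((dY + t) ∘ₗ S)) := by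
    simp only [LinearMap.comp_assoc]
    rw [← LinearMap.comp_assoc _ i S, hSi]
  have hE : S ∘ₗ (dY + t) - (dY + t) ∘ₗ S
      = (i ∘ₗ ((dX + tX) ∘ₗ (p ∘ₗ S))) - (i ∘ₗ (p ∘ₗ ((dY + t) ∘ₗ S))) := by
    calc S ∘ₗ (dY + t) - (dY + t) ∘ₗ S
        = S ∘ₗ (((dY + t) ∘ₗ (LinearMap.id + (t ∘ₗ h + h ∘ₗ t))) ∘ₗ S)
          - S ∘ₗ (((LinearMap.id + (t ∘ₗ h + h ∘ₗ t)) ∘ₗ (dY + t)) ∘ₗ S) := by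
            rw [← c1, ← c2]
      _ = S ∘ₗ (((dY + t) ∘ₗ (LinearMap.id + (t ∘ₗ h + h ∘ₗ t))
            - (LinearMap.id + (t ∘ₗ h + h ∘ₗ t)) ∘ₗ (dY + t)) ∘ₗ S) := by
            rw [LinearMap.sub_comp, LinearMap.comp_sub]
      _ = S ∘ₗ (((dY + t) ∘ₗ (i ∘ₗ p) - (i ∘ₗ p) ∘ₗ (dY + t)) ∘ₗ S) := by rw [hcomm3]
      _ = S ∘ₗ (((dY + t) ∘ₗ (i ∘ₗ p)) ∘ₗ S) - S ∘ₗ (((i ∘ₗ p) ∘ₗ (dY + t)) ∘ₗ S) := by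
            rw [LinearMap.sub_comp, LinearMap.comp_sub]
      _ = (i ∘ₗ ((dX + tX) ∘ₗ (p ∘ₗ S))) - (i ∘ₗ (p ∘ₗ ((dY + t) ∘ₗ S))) := by
            rw [k1, k2]
  have ha : (dX + tX) ∘ₗ (p ∘ₗ S) = (p ∘ₗ S) ∘ₗ (dY + t) := by
    have h0 := congrArg (fun f => p ∘ₗ f) hE
    rw [LinearMap.comp_sub, LinearMap.comp_sub, ← LinearMap.comp_assoc _ i p,
      ← LinearMap.comp_assoc _ i p, hpi, LinearMap.id_comp, LinearMap.id_comp] at h0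
    have h1 := sub_left_inj.mp h0
    rw [LinearMap.comp_assoc (dY + t) S p]
    exact h1.symm
  have hhE : h ∘ₗ (S ∘ₗ (dY + t)) = h ∘ₗ ((dY + t) ∘ₗ S) := by
    have h0 := congrArg (fun f => h ∘ₗ f) hE
    rw [LinearMap.comp_sub, LinearMap.comp_sub, ← LinearMap.comp_assoc _ i h,
      ← LinearMap.comp_assoc _ i h, hsc2, LinearMap.zero_comp, LinearMap.zero_comp,
      sub_self] at h0
    exact sub_eq_zero.mp h0
  refine ⟨?_, ?_, ?_, ?_, ?_, ?_⟩
  · show (p ∘ₗ S) ∘ₗ i = LinearMap.id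
    rw [LinearMap.comp_assoc i S p, hSi, hpi]
  · exact hDYi
  · exact ha
  · show (dY + t) ∘ₗ (h ∘ₗ S) + (h ∘ₗ S) ∘ₗ (dY + t) = LinearMap.id - i ∘ₗ (p ∘ₗ S)
    have h0 := congrArg (fun f => f ∘ₗ S) star
    rw [LinearMap.add_comp, LinearMap.sub_comp, hS2] at h0
    rw [LinearMap.comp_assoc S h (dY + t), LinearMap.comp_assoc S (dY + t) h,
      LinearMap.comp_assoc S p i] at h0
    rw [LinearMap.comp_assoc (dY + t) S h, hhE, h0]
  · show (h ∘ₗ S) ∘ₗ i = 0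
    rw [LinearMap.comp_assoc i S h, hSi, hsc2]
  · intro hh0 hph
    have hTh : (t ∘ₗ h + h ∘ₗ t) ∘ₗ h = h ∘ₗ (t ∘ₗ h + h ∘ₗ t) := by
      rw [LinearMap.add_comp, LinearMap.comp_add]
      rw [LinearMap.comp_assoc h h t, hh0, LinearMap.comp_zero, zero_add,
        LinearMap.comp_assoc h t h, ← LinearMap.comp_assoc t h h, hh0,
        LinearMap.zero_comp, add_zero]
    have hSh : S ∘ₗ h = h ∘ₗ S := by
      have c3 : S ∘ₗ h = S ∘ₗ ((h ∘ₗ (LinearMap.id + (t ∘ₗ h + h ∘ₗ t))) ∘ₗ S) := by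
        rw [LinearMap.comp_assoc, hS2, LinearMap.comp_id]
      have c4 : h ∘ₗ (LinearMap.id + (t ∘ₗ h + h ∘ₗ t))
          = (LinearMap.id + (t ∘ₗ h + h ∘ₗ t)) ∘ₗ h := by
        rw [LinearMap.comp_add, LinearMap.add_comp, LinearMap.comp_id, LinearMap.id_comp,
          hTh]
      rw [c3, c4, ← LinearMap.comp_assoc, ← LinearMap.comp_assoc, hS1, LinearMap.id_comp]
    constructor
    · show (h ∘ₗ S) ∘ₗ (h ∘ₗ S) = 0
      rw [LinearMap.comp_assoc (h ∘ₗ S) S h, ← LinearMap.comp_assoc S h S, hSh,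
        LinearMap.comp_assoc S S h, ← LinearMap.comp_assoc (S ∘ₗ S) h h, hh0,
        LinearMap.zero_comp]
    · show (p ∘ₗ S) ∘ₗ (h ∘ₗ S) = 0
      rw [LinearMap.comp_assoc (h ∘ₗ S) S p, ← LinearMap.comp_assoc S h S, hSh,
        LinearMap.comp_assoc S S h, ← LinearMap.comp_assoc (S ∘ₗ S) h p, hph,
        LinearMap.zero_comp]
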